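/- Every maximal clique of the parallelism relation ∥ (k₁ ∥ k₂ iff ∅ ≠ k₁ ∩ k₂ ⊆ W) on proper lines is of exactly one of two disjoint types: either a star direction (all lines of the clique pass through a common improper point) or a top direction (all lines of the clique are contained in a common proper plane). -/

import Mathlib

/-- A projective space of dimension at least 3, given by its point set `S` and its
set of lines: any two points lie on a unique line, the Veblen (Pasch) axiom holds,
and there exist two disjoint lines (dimension ≥ 3). -/
structure ProjSpace (S : Type*) where
  L : Set (Set S)
  two_points : ∀ k ∈ L, ∃ a ∈ k, ∃ b ∈ k, a ≠ b
  unique_meet : ∀ k ∈ L, ∀ l ∈ L, k ≠ l → (k ∩ l).Subsingleton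
  join : ∀ a b : S, a ≠ b → ∃ k ∈ L, a ∈ k ∧ b ∈ k
  veblen : ∀ l₁ ∈ L, ∀ l₂ ∈ L, ∀ l₃ ∈ L, ∀ l₄ ∈ L, ∀ p a b c d : S,
    l₁ ≠ l₂ → p ≠ a → p ≠ b → p ≠ c → p ≠ d →
    p ∈ l₁ → a ∈ l₁ → c ∈ l₁ → p ∈ l₂ → b ∈ l₂ → d ∈ l₂ →
    a ∈ l₃ → b ∈ l₃ → c ∈ l₄ → d ∈ l₄ → (l₃ ∩ l₄).Nonempty
  dim3 : ∃ k ∈ L, ∃ l ∈ L, k ∩ l = ∅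

namespace ProjSpace

variable {S : Type*}

/-- A subspace: any line through two of its points is contained in it. -/
def IsSubspace (P : ProjSpace S) (X : Set S) : Prop :=
  ∀ k ∈ P.L, ∀ a ∈ k, ∀ b ∈ k, a ≠ b → a ∈ X → b ∈ X → k ⊆ X

/-- The subspace spanned by a point set. -/
def span (P : ProjSpace S) (X : Set S) : Set S :=
  ⋂₀ {Y | P.IsSubspace Y ∧ X ⊆ Y}

/-- A plane: the span of a line together with a point outside it. -/
def IsPlane (P : ProjSpace S) (Pl : Set S) : Prop :=
  ∃ k ∈ P.L, ∃ a, a ∉ k ∧ Pl = P.span (insert a k)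

/-- `HasIndex P W lam`: some line has exactly `lam` points in `W` and every line not
contained in `W` has at most `lam` points in `W`. -/
def HasIndex (P : ProjSpace S) (W : Set S) (lam : ℕ) : Prop :=
  (∃ k ∈ P.L, (k ∩ W).encard = (lam : ℕ∞)) ∧
    ∀ k ∈ P.L, ¬ k ⊆ W → (k ∩ W).encard ≤ (lam : ℕ∞)

/-- Three lines form a triangle: pairwise distinct, pairwise intersecting,
not concurrent. -/
def LineTriangle (P : ProjSpace S) (k₁ k₂ k₃ : Set S) : Prop :=
  k₁ ∈ P.L ∧ k₂ ∈ P.L ∧ k₃ ∈ P.L ∧ k₁ ≠ k₂ ∧ k₁ ≠ k₃ ∧ k₂ ≠ k₃ ∧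
    (k₁ ∩ k₂).Nonempty ∧ (k₁ ∩ k₃).Nonempty ∧ (k₂ ∩ k₃).Nonempty ∧
    ¬ (k₁ ∩ k₂ ∩ k₃).Nonempty

/-- Parallelism w.r.t. the horizon `W`: the lines meet, and only inside `W`. -/
def Par (W : Set S) (k₁ k₂ : Set S) : Prop :=
  (k₁ ∩ k₂).Nonempty ∧ k₁ ∩ k₂ ⊆ W

end ProjSpace

namespace ProjSpace

variable {S : Type*}

/-- A clique of the parallelism relation: a set of proper lines that are pairwise
parallel. -/
def IsParClique (P : ProjSpace S) (W : Set S) (C : Set (Set S)) : Prop :=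
  C ⊆ P.L ∧ (∀ k ∈ C, ¬ k ⊆ W) ∧ ∀ k ∈ C, ∀ l ∈ C, k ≠ l → Par W k l

/-- A maximal clique of the parallelism relation. -/
def IsMaxParClique (P : ProjSpace S) (W : Set S) (C : Set (Set S)) : Prop :=
  IsParClique P W C ∧ ∀ C', IsParClique P W C' → C ⊆ C' → C' = C

/-- A star direction: all lines of the clique pass through a common improper point. -/
def IsStarDirection (P : ProjSpace S) (W : Set S) (C : Set (Set S)) : Prop :=
  IsMaxParClique P W C ∧ ∃ a ∈ W, ∀ k ∈ C, a ∈ k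

/-- A top direction: all lines of the clique are contained in a common proper plane. -/
def IsTopDirection (P : ProjSpace S) (W : Set S) (C : Set (Set S)) : Prop :=
  IsMaxParClique P W C ∧ ∃ Pl : Set S, P.IsPlane Pl ∧ ¬ Pl ⊆ W ∧ ∀ k ∈ C, k ⊆ Pl

end ProjSpace

namespace ProjSpace

variable {S : Type*}

lemma line_unique (P : ProjSpace S) {k l : Set S} (hk : k ∈ P.L) (hl : l ∈ P.L) {u v : S}
    (huv : u ≠ v) (huk : u ∈ k) (hul : u ∈ l) (hvk : v ∈ k) (hvl : v ∈ l) : k = l := by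
  by_contra h
  exact huv (P.unique_meet k hk l hl h ⟨huk, hul⟩ ⟨hvk, hvl⟩)

/-- The cone over `k` with apex `a`. -/
def cone (P : ProjSpace S) (a : S) (k : Set S) : Set S :=
  {x | x = a ∨ ∃ p ∈ k, ∃ l ∈ P.L, a ∈ l ∧ p ∈ l ∧ x ∈ l}

variable {P : ProjSpace S} {a : S} {k : Set S}

lemma apex_mem_cone : a ∈ P.cone a k := Or.inl rfl

lemma line_subset_cone (ha : a ∉ k) : k ⊆ P.cone a k := by
  intro p hp
  have hap : a ≠ p := by rintro rfl; exact ha hp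
  obtain ⟨l, hl, hal, hpl⟩ := P.join a p hap
  exact Or.inr ⟨p, hp, l, hl, hal, hpl, hpl⟩

lemma exists_point_off {g : Set S} (hg : g ∈ P.L) (hk : k ∈ P.L) (hgk : g ≠ k) :
    ∃ u ∈ g, u ∉ k := by
  obtain ⟨u, hug, v, hvg, huv⟩ := P.two_points g hg
  by_cases h1 : u ∈ k
  · by_cases h2 : v ∈ k
    · exact absurd (P.line_unique hg hk huv hug h1 hvg h2) hgk
    · exact ⟨v, hvg, h2⟩
  · exact ⟨u, hug, h1⟩

lemma cone_line_meets (hk : k ∈ P.L) (ha : a ∉ k) {g : Set S} (hg : g ∈ P.L)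
    (hag : a ∉ g) {u v : S} (huv : u ≠ v) (hug : u ∈ g) (hvg : v ∈ g)
    (huc : u ∈ P.cone a k) (hvc : v ∈ P.cone a k) : (g ∩ k).Nonempty := by
  by_cases huk : u ∈ k
  · exact ⟨u, hug, huk⟩
  by_cases hvk : v ∈ k
  · exact ⟨v, hvg, hvk⟩
  have hua : u ≠ a := by rintro rfl; exact hag hug
  have hva : v ≠ a := by rintro rfl; exact hag hvg
  obtain ⟨p, hp, lu, hlu, halu, hplu, hulu⟩ := huc.resolve_left hua
  obtain ⟨q, hq, lv, hlv, halv, hqlv, hvlv⟩ := hvc.resolve_left hva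
  have hlulv : lu ≠ lv := by
    intro h
    have hgl : g = lu := P.line_unique hg hlu huv hug hulu hvg (h ▸ hvlv)
    exact hag (hgl ▸ halu)
  exact P.veblen lu hlu lv hlv g hg k hk a u v p q hlulv hua.symm hva.symm
    (by rintro rfl; exact ha hp) (by rintro rfl; exact ha hq)
    halu hulu hplu halv hvlv hqlv hug hvg hp hq

lemma cone_subspace (hk : k ∈ P.L) (ha : a ∉ k) : P.IsSubspace (P.cone a k) := by
  have hmain : ∀ g ∈ P.L, a ∉ g → ∀ u v : S, u ∈ g → v ∈ g → u ≠ v →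
      u ∈ P.cone a k → v ∈ P.cone a k → u ∉ k → g ⊆ P.cone a k := by
    intro g hg hag u v hug hvg huv huc hvc huk
    obtain ⟨s, hsg, hsk⟩ := cone_line_meets hk ha hg hag huv hug hvg huc hvc
    have hua : u ≠ a := by rintro rfl; exact hag hug
    obtain ⟨p, hp, lu, hlu, halu, hplu, hulu⟩ := huc.resolve_left hua
    intro x hxg
    by_cases hxu : x = u
    · rw [hxu]; exact huc
    by_cases hxk : x ∈ k
    · exact line_subset_cone ha hxk
    have hxa : x ≠ a := by rintro rfl; exact hag hxg
    obtain ⟨lx, hlx, halx, hxlx⟩ := P.join a x (Ne.symm hxa)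
    have hlug : lu ≠ g := by intro h; exact hag (h ▸ halu)
    have hconc := P.veblen lu hlu g hg lx hlx k hk u a x p s hlug hua (Ne.symm hxu)
      (by rintro rfl; exact huk hp) (by rintro rfl; exact huk hsk)
      hulu halu hplu hug hxg hsg halx hxlx hp hsk
    obtain ⟨t, htlx, htk⟩ := hconc
    exact Or.inr ⟨t, htk, lx, hlx, halx, htlx, hxlx⟩
  intro g hg u hug v hvg huv huc hvc
  by_cases hag : a ∈ g
  · obtain ⟨w, hwg, hwc, hwa⟩ : ∃ w, w ∈ g ∧ w ∈ P.cone a k ∧ w ≠ a := by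
      rcases eq_or_ne u a with rfl | h
      · exact ⟨v, hvg, hvc, fun h2 => huv h2.symm⟩
      · exact ⟨u, hug, huc, h⟩
    obtain ⟨p, hp, l, hl, hal, hpl, hwl⟩ := hwc.resolve_left hwa
    have hgl : g = l := P.line_unique hg hl hwa hwg hwl hag hal
    intro x hxg
    exact Or.inr ⟨p, hp, l, hl, hal, hpl, hgl ▸ hxg⟩
  · by_cases hgk : g = k
    · intro x hx
      exact line_subset_cone ha (hgk ▸ hx)
    · by_cases huk : u ∈ k
      · by_cases hvk : v ∈ k
        · exact absurd (P.line_unique hg hk huv hug huk hvg hvk) hgk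
        · exact hmain g hg hag v u hvg hug huv.symm hvc huc hvk
      · exact hmain g hg hag u v hug hvg huv huc hvc huk

lemma cone_line_thru_apex (ha : a ∉ k) {g : Set S} (hg : g ∈ P.L) (hag : a ∈ g)
    (hgc : g ⊆ P.cone a k) : ∃ p ∈ k, p ∈ g := by
  obtain ⟨u, hug, v, hvg, huv⟩ := P.two_points g hg
  obtain ⟨w, hwg, hwa⟩ : ∃ w, w ∈ g ∧ w ≠ a := by
    rcases eq_or_ne u a with rfl | h
    · exact ⟨v, hvg, fun h2 => huv h2.symm⟩
    · exact ⟨u, hug, h⟩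
  obtain ⟨p, hp, l, hl, hal, hpl, hwl⟩ := (hgc hwg).resolve_left hwa
  have hgl : g = l := P.line_unique hg hl hwa hwg hwl hag hal
  exact ⟨p, hp, hgl ▸ hpl⟩

lemma cone_meets_aux1 (hk : k ∈ P.L) (ha : a ∉ k) {g h : Set S} (hg : g ∈ P.L)
    (hh : h ∈ P.L) (hag : a ∈ g) (hah : a ∉ h)
    (hgc : g ⊆ P.cone a k) (hhc : h ⊆ P.cone a k) : (g ∩ h).Nonempty := by
  obtain ⟨p, hp, hpg⟩ := cone_line_thru_apex ha hg hag hgc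
  by_cases hhk : h = k
  · exact ⟨p, hpg, hhk ▸ hp⟩
  obtain ⟨u, huh, v, hvh, huv⟩ := P.two_points h hh
  obtain ⟨s, hsh, hsk⟩ := cone_line_meets hk ha hh hah huv huh hvh (hhc huh) (hhc hvh)
  by_cases hph : p ∈ h
  · exact ⟨p, hpg, hph⟩
  obtain ⟨w, hwh, hwk⟩ := exists_point_off hh hk hhk
  have hwa : w ≠ a := by rintro rfl; exact hah hwh
  obtain ⟨r, hr, lw, hlw, halw, hrlw, hwlw⟩ := (hhc hwh).resolve_left hwa
  by_cases hrp : r = p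
  · have hap : a ≠ p := by rintro rfl; exact ha hp
    have : lw = g := P.line_unique hlw hg hap halw hag (hrp ▸ hrlw) hpg
    exact ⟨w, this ▸ hwlw, hwh⟩
  · have hrs : r ≠ s := by
      rintro rfl
      have hsw : r ≠ w := by rintro rfl; exact hwk hr
      have : h = lw := P.line_unique hh hlw (Ne.symm hsw) hwh hwlw hsh hrlw
      exact hah (this ▸ halw)
    have hlwk : lw ≠ k := by intro h2; exact ha (h2 ▸ halw)
    exact P.veblen lw hlw k hk g hg h hh r a p w s hlwk
      (by rintro rfl; exact ha hr) hrp (by rintro rfl; exact hwk hr) hrs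
      hrlw halw hwlw hr hp hsk hag hpg hwh hsh

lemma cone_meets_aux2 (hk : k ∈ P.L) (ha : a ∉ k) {g h : Set S} (hg : g ∈ P.L)
    (hh : h ∈ P.L) (hag : a ∉ g) (hah : a ∉ h)
    (hgc : g ⊆ P.cone a k) (hhc : h ⊆ P.cone a k) : (g ∩ h).Nonempty := by
  obtain ⟨u0, hu0g, v0, hv0g, hu0v0⟩ := P.two_points g hg
  obtain ⟨u1, hu1h, v1, hv1h, hu1v1⟩ := P.two_points h hh
  by_cases hgk : g = k
  · by_cases hhk : h = k
    · exact ⟨u0, hu0g, by rw [hhk, ← hgk]; exact hu0g⟩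
    · obtain ⟨s, hsh, hsk⟩ := cone_line_meets hk ha hh hah hu1v1 hu1h hv1h (hhc hu1h) (hhc hv1h)
      exact ⟨s, hgk ▸ hsk, hsh⟩
  by_cases hhk : h = k
  · obtain ⟨s, hsg, hsk⟩ := cone_line_meets hk ha hg hag hu0v0 hu0g hv0g (hgc hu0g) (hgc hv0g)
    exact ⟨s, hsg, hhk ▸ hsk⟩
  obtain ⟨s, hsg, hsk⟩ := cone_line_meets hk ha hg hag hu0v0 hu0g hv0g (hgc hu0g) (hgc hv0g)
  obtain ⟨t, hth, htk⟩ := cone_line_meets hk ha hh hah hu1v1 hu1h hv1h (hhc hu1h) (hhc hv1h)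
  obtain ⟨u, hug, huk⟩ := exists_point_off hg hk hgk
  obtain ⟨w, hwh, hwk⟩ := exists_point_off hh hk hhk
  by_cases huh : u ∈ h
  · exact ⟨u, hug, huh⟩
  by_cases hwg : w ∈ g
  · exact ⟨w, hwg, hwh⟩
  have huw : u ≠ w := by rintro rfl; exact huh hwh
  obtain ⟨l1, hl1, hul1, hwl1⟩ := P.join u w huw
  by_cases hal1 : a ∈ l1
  · have hua : u ≠ a := by rintro rfl; exact hag hug
    obtain ⟨p, hp, lu, hlu, halu, hplu, hulu⟩ := ((hgc hug).resolve_left hua :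
      ∃ p ∈ k, ∃ l ∈ P.L, a ∈ l ∧ p ∈ l ∧ u ∈ l)
    have hl1lu : l1 = lu := P.line_unique hl1 hlu hua hul1 hulu hal1 halu
    have hwlu : w ∈ lu := hl1lu ▸ hwl1
    have hps : p ≠ s := by
      rintro rfl
      have hus : u ≠ p := by rintro rfl; exact huk hp
      have : g = lu := P.line_unique hg hlu hus hug hulu hsg hplu
      exact hwg (this ▸ hwlu)
    have hpt : p ≠ t := by
      rintro rfl
      have hwt : w ≠ p := by rintro rfl; exact hwk hp
      have : h = lu := P.line_unique hh hlu hwt hwh hwlu hth hplu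
      exact huh (this ▸ hulu)
    have hluk : lu ≠ k := by intro h2; exact ha (h2 ▸ halu)
    exact P.veblen lu hlu k hk g hg h hh p u s w t hluk
      (by rintro rfl; exact huk hp) hps (by rintro rfl; exact hwk hp) hpt
      hplu hulu hwlu hp hsk htk hug hsg hwh hth
  · have hl1c : l1 ⊆ P.cone a k :=
      cone_subspace hk ha l1 hl1 u hul1 w hwl1 huw (hgc hug) (hhc hwh)
    obtain ⟨r, hrl1, hrk⟩ :=
      cone_line_meets hk ha hl1 hal1 huw hul1 hwl1 (hl1c hul1) (hl1c hwl1)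
    have hrs : r ≠ s := by
      rintro rfl
      have hus : u ≠ r := by rintro rfl; exact huk hrk
      have : g = l1 := P.line_unique hg hl1 hus hug hul1 hsg hrl1
      exact hwg (this ▸ hwl1)
    have hrt : r ≠ t := by
      rintro rfl
      have hwt : w ≠ r := by rintro rfl; exact hwk hrk
      have : h = l1 := P.line_unique hh hl1 hwt hwh hwl1 hth hrl1
      exact huh (this ▸ hul1)
    have hl1k : l1 ≠ k := by intro h2; exact huk (h2 ▸ hul1)
    exact P.veblen l1 hl1 k hk g hg h hh r u s w t hl1k
      (by rintro rfl; exact huk hrk) hrs (by rintro rfl; exact hwk hrk) hrt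
      hrl1 hul1 hwl1 hrk hsk htk hug hsg hwh hth

lemma cone_lines_meet (hk : k ∈ P.L) (ha : a ∉ k) {g h : Set S} (hg : g ∈ P.L)
    (hh : h ∈ P.L) (hgc : g ⊆ P.cone a k) (hhc : h ⊆ P.cone a k) :
    (g ∩ h).Nonempty := by
  by_cases hag : a ∈ g
  · by_cases hah : a ∈ h
    · exact ⟨a, hag, hah⟩
    · exact cone_meets_aux1 hk ha hg hh hag hah hgc hhc
  · by_cases hah : a ∈ h
    · obtain ⟨x, h1, h2⟩ := cone_meets_aux1 hk ha hh hg hah hag hhc hgc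
      exact ⟨x, h2, h1⟩
    · exact cone_meets_aux2 hk ha hg hh hag hah hgc hhc

lemma span_isSubspace (P : ProjSpace S) (X : Set S) : P.IsSubspace (P.span X) := by
  intro g hg u hug v hvg huv huX hvX x hxg
  intro Y hY
  exact hY.1 g hg u hug v hvg huv (huX Y hY) (hvX Y hY) hxg

lemma subset_span (P : ProjSpace S) (X : Set S) : X ⊆ P.span X :=
  fun _ hx => fun _ hY => hY.2 hx

lemma span_insert_eq_cone (hk : k ∈ P.L) (ha : a ∉ k) :
    P.span (insert a k) = P.cone a k := by
  apply subset_antisymm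
  · apply Set.sInter_subset_of_mem
    refine ⟨cone_subspace hk ha, ?_⟩
    intro x hx
    rcases hx with rfl | hx
    · exact apex_mem_cone
    · exact line_subset_cone ha hx
  · intro x hx Y hY
    rcases hx with rfl | ⟨p, hp, l, hl, hal, hpl, hxl⟩
    · exact hY.2 (Set.mem_insert _ _)
    · exact hY.1 l hl a hal p hpl (by rintro rfl; exact ha hp)
        (hY.2 (Set.mem_insert _ _)) (hY.2 (Set.mem_insert_of_mem _ hp)) hxl

lemma plane_isSubspace {Pl : Set S} (h : P.IsPlane Pl) : P.IsSubspace Pl := by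
  obtain ⟨m, hm, b, hb, rfl⟩ := h
  exact span_isSubspace P _

lemma exists_not_mem_plane {Pl : Set S} (h : P.IsPlane Pl) : ∃ y, y ∉ Pl := by
  obtain ⟨m, hm, b, hb, rfl⟩ := h
  rw [span_insert_eq_cone hm hb]
  by_contra hall
  push_neg at hall
  obtain ⟨m₁, hm₁, m₂, hm₂, hdisj⟩ := P.dim3
  have hne := cone_lines_meet hm hb hm₁ hm₂ (fun x _ => hall x) (fun x _ => hall x)
  rw [hdisj] at hne
  exact Set.not_nonempty_empty hne

end ProjSpace

namespace ProjSpace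

variable {S : Type*} {P : ProjSpace S} {W : Set S} {lam : ℕ}

lemma two_lam_cast (lam : ℕ) : 2 * (lam : ℕ∞) + 2 = ((2 * lam + 2 : ℕ) : ℕ∞) := by
  push_cast; ring

lemma exists_proper_line (hind : P.HasIndex W lam)
    (hsize : ∀ k ∈ P.L, 2 * (lam : ℕ∞) + 2 ≤ k.encard) : ∃ k ∈ P.L, ¬ k ⊆ W := by
  obtain ⟨k, hk, hcard⟩ := hind.1
  refine ⟨k, hk, fun hsub => ?_⟩
  have hkW : k ∩ W = k := Set.inter_eq_left.2 hsub
  have h1 := hsize k hk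
  rw [hkW] at hcard
  rw [hcard, two_lam_cast] at h1
  have h2 : (2 * lam + 2 : ℕ) ≤ lam := by exact_mod_cast h1
  omega

lemma exists_extension (hind : P.HasIndex W lam)
    (hsize : ∀ k ∈ P.L, 2 * (lam : ℕ∞) + 2 ≤ k.encard)
    {X : Set S} (hX : P.IsSubspace X)
    {x y : S} (hxX : x ∈ X) (hxW : x ∉ W) (hyX : y ∉ X) : ∃ q, q ∉ X ∧ q ∉ W := by
  by_contra hcc
  push_neg at hcc
  have hxy : x ≠ y := by rintro rfl; exact hyX hxX
  obtain ⟨g, hg, hxg, hyg⟩ := P.join x y hxy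
  have hsub : g \ {x} ⊆ g ∩ W := by
    rintro z ⟨hzg, hzx⟩
    refine ⟨hzg, hcc z fun hzX => ?_⟩
    exact hyX (hX g hg z hzg x hxg (by simpa using hzx) hzX hxX hyg)
  have h1 : (g \ {x}).encard + 1 = g.encard := Set.encard_diff_singleton_add_one hxg
  have h2 : 2 * (lam : ℕ∞) + 2 ≤ g.encard := hsize g hg
  have h3 : (g ∩ W).encard ≤ (lam : ℕ∞) := hind.2 g hg (fun hgW => hxW (hgW hxg))
  have h4 : (g \ {x}).encard ≤ (g ∩ W).encard := Set.encard_mono hsub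
  have h5 : 2 * (lam : ℕ∞) + 2 ≤ (lam : ℕ∞) + 1 :=
    calc 2 * (lam : ℕ∞) + 2 ≤ g.encard := h2
    _ = (g \ {x}).encard + 1 := h1.symm
    _ ≤ (g ∩ W).encard + 1 := add_le_add_left h4 1
    _ ≤ (lam : ℕ∞) + 1 := add_le_add_left h3 1
  rw [two_lam_cast, show ((lam : ℕ∞) + 1 : ℕ∞) = ((lam + 1 : ℕ) : ℕ∞) by push_cast; ring] at h5
  have h6 : (2 * lam + 2 : ℕ) ≤ lam + 1 := by exact_mod_cast h5
  omega

lemma exists_not_mem_line {k : Set S} (hk : k ∈ P.L) : ∃ b, b ∉ k := by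
  obtain ⟨m₁, hm₁, m₂, hm₂, hdisj⟩ := P.dim3
  by_contra hcc
  push_neg at hcc
  have e1 : m₁ = k := by
    obtain ⟨u, hu, v, hv, huv⟩ := P.two_points m₁ hm₁
    exact P.line_unique hm₁ hk huv hu (hcc u) hv (hcc v)
  have e2 : m₂ = k := by
    obtain ⟨u, hu, v, hv, huv⟩ := P.two_points m₂ hm₂
    exact P.line_unique hm₂ hk huv hu (hcc u) hv (hcc v)
  obtain ⟨u, hu, -, -, -⟩ := P.two_points k hk
  have : u ∈ m₁ ∩ m₂ := ⟨by rw [e1]; exact hu, by rw [e2]; exact hu⟩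
  rw [hdisj] at this
  exact this

end ProjSpace

open ProjSpace in
/-- every maximal clique of the parallelism relation is of exactly one of
two disjoint types: a star direction or a top direction. -/
theorem max_par_clique_dichotomy {S : Type*} (P : ProjSpace S) (W : Set S)
    (lam : ℕ) (hlam : 0 < lam) (hind : P.HasIndex W lam)
    (hsize : ∀ k ∈ P.L, 2 * (lam : ℕ∞) + 2 ≤ k.encard)
    (C : Set (Set S)) (hC : IsMaxParClique P W C) :
    Xor' (∃ a ∈ W, ∀ k ∈ C, a ∈ k)
         (∃ Pl : Set S, P.IsPlane Pl ∧ ¬ Pl ⊆ W ∧ ∀ k ∈ C, k ⊆ Pl) := by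
  obtain ⟨⟨hCL, hCproper, hCpar⟩, hCmax⟩ := hC
  have hCne : C.Nonempty := by
    rcases Set.eq_empty_or_nonempty C with rfl | h
    · obtain ⟨k₀, hk₀, hk₀W⟩ := ProjSpace.exists_proper_line hind hsize
      have hcl : IsParClique P W {k₀} := by
        refine ⟨Set.singleton_subset_iff.2 hk₀, ?_, ?_⟩
        · intro k hk; rw [Set.mem_singleton_iff] at hk; rw [hk]; exact hk₀W
        · intro k hk l hl hkl
          rw [Set.mem_singleton_iff] at hk hl
          exact absurd (hk.trans hl.symm) hkl
      have := hCmax {k₀} hcl (Set.empty_subset _)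
      exact absurd this (by simp)
    · exact h
  by_cases hA : ∃ a ∈ W, ∀ k ∈ C, a ∈ k
  · left
    refine ⟨hA, ?_⟩
    rintro ⟨Pl, hPlane, hPlW, hPl⟩
    obtain ⟨a, haW, haC⟩ := hA
    have hC'eq : {l | l ∈ P.L ∧ a ∈ l ∧ ¬ l ⊆ W} = C := by
      apply hCmax
      · refine ⟨fun l hl => hl.1, fun l hl => hl.2.2, ?_⟩
        intro k hk l hl hkl
        refine ⟨⟨a, hk.2.1, hl.2.1⟩, ?_⟩
        intro x hx
        have hxa : x = a := P.unique_meet k hk.1 l hl.1 hkl hx ⟨hk.2.1, hl.2.1⟩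
        rw [hxa]; exact haW
      · intro k hk
        exact ⟨hCL hk, haC k hk, hCproper k hk⟩
    obtain ⟨k₁, hk₁C⟩ := hCne
    obtain ⟨x, hx₁, hxW⟩ := Set.not_subset.1 (hCproper k₁ hk₁C)
    have hxPl : x ∈ Pl := hPl k₁ hk₁C hx₁
    obtain ⟨y, hyPl⟩ := ProjSpace.exists_not_mem_plane hPlane
    obtain ⟨q, hqPl, hqW⟩ := ProjSpace.exists_extension hind hsize
      (ProjSpace.plane_isSubspace hPlane) hxPl hxW hyPl
    have hqa : a ≠ q := by rintro rfl; exact hqW haW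
    obtain ⟨g, hg, hag, hqg⟩ := P.join a q hqa
    have hgC : g ∈ C := by
      rw [← hC'eq]
      exact ⟨hg, hag, fun hgW => hqW (hgW hqg)⟩
    exact hqPl (hPl g hgC hqg)
  · right
    refine ⟨?_, hA⟩
    by_cases htwo : ∃ k ∈ C, ∃ l ∈ C, k ≠ l
    · obtain ⟨k, hkC, l, hlC, hkl⟩ := htwo
      obtain ⟨hklne, hklW⟩ := hCpar k hkC l hlC hkl
      obtain ⟨p, hpk, hpl⟩ := hklne
      have hpW : p ∈ W := hklW ⟨hpk, hpl⟩
      obtain ⟨m, hmC, hpm⟩ : ∃ m ∈ C, p ∉ m := by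
        by_contra hcc
        push_neg at hcc
        exact hA ⟨p, hpW, hcc⟩
      have hmk : m ≠ k := by rintro rfl; exact hpm hpk
      have hml : m ≠ l := by rintro rfl; exact hpm hpl
      obtain ⟨c, hcl, hcm⟩ := (hCpar l hlC m hmC hml.symm).1
      have hck : c ∉ k := by
        intro hck
        have hcp : c = p := P.unique_meet k (hCL hkC) l (hCL hlC) hkl ⟨hck, hcl⟩ ⟨hpk, hpl⟩
        rw [hcp] at hcm
        exact hpm hcm
      have hPlsub : P.IsSubspace (P.span (insert c k)) := ProjSpace.span_isSubspace P _
      have hkPl : k ⊆ P.span (insert c k) :=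
        fun w hw => ProjSpace.subset_span P _ (Set.mem_insert_of_mem _ hw)
      have hcPl : c ∈ P.span (insert c k) := ProjSpace.subset_span P _ (Set.mem_insert _ _)
      have hpc : p ≠ c := by rintro rfl; exact hck hpk
      have hlPl : l ⊆ P.span (insert c k) :=
        hPlsub l (hCL hlC) p hpl c hcl hpc (hkPl hpk) hcPl
      obtain ⟨q, hqk, hqm⟩ := (hCpar k hkC m hmC hmk.symm).1
      have hqc : q ≠ c := by rintro rfl; exact hck hqk
      have hmPl : m ⊆ P.span (insert c k) :=
        hPlsub m (hCL hmC) q hqm c hcm hqc (hkPl hqk) hcPl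
      refine ⟨P.span (insert c k), ⟨k, hCL hkC, c, hck, rfl⟩, ?_, ?_⟩
      · intro hsub
        obtain ⟨u, hu, huW⟩ := Set.not_subset.1 (hCproper k hkC)
        exact huW (hsub (hkPl hu))
      · intro n hnC
        by_cases hnk : n = k
        · rw [hnk]; exact hkPl
        by_cases hnl : n = l
        · rw [hnl]; exact hlPl
        by_cases hnm : n = m
        · rw [hnm]; exact hmPl
        obtain ⟨x₁, hx₁n, hx₁k⟩ := (hCpar n hnC k hkC hnk).1
        obtain ⟨x₂, hx₂n, hx₂l⟩ := (hCpar n hnC l hlC hnl).1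
        obtain ⟨x₃, hx₃n, hx₃m⟩ := (hCpar n hnC m hmC hnm).1
        by_cases h12 : x₁ = x₂
        · have hx1p : x₁ = p := by
            apply P.unique_meet k (hCL hkC) l (hCL hlC) hkl ⟨hx₁k, ?_⟩ ⟨hpk, hpl⟩
            rw [h12]; exact hx₂l
          have h13 : x₁ ≠ x₃ := by
            rintro rfl
            rw [hx1p] at hx₃m
            exact hpm hx₃m
          exact hPlsub n (hCL hnC) x₁ hx₁n x₃ hx₃n h13 (hkPl hx₁k) (hmPl hx₃m)
        · exact hPlsub n (hCL hnC) x₁ hx₁n x₂ hx₂n h12 (hkPl hx₁k) (hlPl hx₂l)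
    · push_neg at htwo
      obtain ⟨k, hkC⟩ := hCne
      have hall : ∀ l ∈ C, l = k := fun l hl => htwo l hl k hkC
      have hkW : ∀ w ∈ k, w ∉ W := by
        intro w hw hwW
        exact hA ⟨w, hwW, fun l hl => by rw [hall l hl]; exact hw⟩
      obtain ⟨b, hb⟩ := ProjSpace.exists_not_mem_line (hCL hkC)
      refine ⟨P.span (insert b k), ⟨k, hCL hkC, b, hb, rfl⟩, ?_, ?_⟩
      · intro hsub
        obtain ⟨u, hu, -, -, -⟩ := P.two_points k (hCL hkC)
        exact hkW u hu (hsub (ProjSpace.subset_span P _ (Set.mem_insert_of_mem _ hu)))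
      · intro l hl
        rw [hall l hl]
        exact fun w hw => ProjSpace.subset_span P _ (Set.mem_insert_of_mem _ hw)
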